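/- Let H and H' be two commutative subalgebras of n×n complex matrices, each closed under the conjugate-transpose operation, each equal to the full space of traceless matrices diagonal in some orthonormal basis B (resp. B') of ℂ^n. If tr(AB) = 0 for all A ∈ H and B ∈ H', then the bases B and B' are mutually unbiased: |⟨φⱼ|ψᵢ⟩|² = 1/n for all i, j. -/

import Mathlib

open Matrix BigOperators

def diagClass (n : ℕ) (ψ : Fin n → Fin n → ℂ) : Set (Matrix (Fin n) (Fin n) ℂ) :=
  {A | ∃ a : Fin n → ℂ, ∑ i, a i = 0 ∧
    A = ∑ i, a i • Matrix.of fun x y => ψ i x * (starRingEnd ℂ) (ψ i y)}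

lemma col_orthonormal {n : ℕ} (ψ : Fin n → Fin n → ℂ)
    (hψ : ∀ i j, ∑ x, (starRingEnd ℂ) (ψ i x) * ψ j x = if i = j then 1 else 0) :
    ∀ x y, ∑ k, (starRingEnd ℂ) (ψ k x) * ψ k y = if x = y then 1 else 0 := by
  have h1 : (Matrix.of ψ) * (Matrix.of ψ)ᴴ = 1 := by
    ext i j
    simp only [Matrix.mul_apply, Matrix.conjTranspose_apply, Matrix.of_apply, Matrix.one_apply,
      ← starRingEnd_apply]
    rw [show (∑ x, ψ i x * (starRingEnd ℂ) (ψ j x)) = ∑ x, (starRingEnd ℂ) (ψ j x) * ψ i x from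
      Finset.sum_congr rfl fun x _ => mul_comm _ _, hψ j i]
    simp [eq_comm]
  have h2 : (Matrix.of ψ)ᴴ * (Matrix.of ψ) = 1 := mul_eq_one_comm.mp h1
  intro x y
  have h3 := congrFun (congrFun h2 x) y
  simp only [Matrix.mul_apply, Matrix.conjTranspose_apply, Matrix.of_apply, Matrix.one_apply,
    ← starRingEnd_apply] at h3
  exact h3

theorem stmt_4 (n : ℕ) (hn : 0 < n)
    (ψ φ : Fin n → Fin n → ℂ)
    (hψ : ∀ i j, ∑ x, (starRingEnd ℂ) (ψ i x) * ψ j x = if i = j then 1 else 0)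
    (hφ : ∀ i j, ∑ x, (starRingEnd ℂ) (φ i x) * φ j x = if i = j then 1 else 0)
    (horth : ∀ A ∈ diagClass n ψ, ∀ B ∈ diagClass n φ, (A * B).trace = 0) :
    ∀ i j, ‖∑ x, (starRingEnd ℂ) (φ j x) * ψ i x‖ ^ 2 = 1 / n := by
  have hnC : (n : ℂ) ≠ 0 := Nat.cast_ne_zero.mpr hn.ne'
  set s : Fin n → Fin n → ℂ := fun k l => ∑ x, (starRingEnd ℂ) (φ l x) * ψ k x with hs
  set T : Fin n → Fin n → ℂ := fun k l => (starRingEnd ℂ) (s k l) * s k l with hT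
  have tr : ∀ k l, ((Matrix.of fun x y => ψ k x * (starRingEnd ℂ) (ψ k y)) *
      (Matrix.of fun x y => φ l x * (starRingEnd ℂ) (φ l y))).trace = T k l := by
    intro k l
    simp only [Matrix.trace, Matrix.diag, Matrix.mul_apply, Matrix.of_apply, hT, hs, map_sum,
      RingHom.map_mul, Complex.conj_conj]
    rw [Finset.sum_mul_sum]
    rw [Finset.sum_comm]
    exact Finset.sum_congr rfl fun x _ => Finset.sum_congr rfl fun y _ => by ring
  have key : ∀ a b : Fin n → ℂ,
      ((∑ k, a k • Matrix.of fun x y => ψ k x * (starRingEnd ℂ) (ψ k y)) *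
       (∑ l, b l • Matrix.of fun x y => φ l x * (starRingEnd ℂ) (φ l y))).trace
        = ∑ k, ∑ l, a k * b l * T k l := by
    intro a b
    rw [Matrix.sum_mul, Matrix.trace_sum]
    refine Finset.sum_congr rfl fun k _ => ?_
    rw [Matrix.mul_sum, Matrix.trace_sum]
    refine Finset.sum_congr rfl fun l _ => ?_
    rw [Matrix.smul_mul, Matrix.mul_smul, smul_smul, Matrix.trace_smul, tr k l, smul_eq_mul]
  have hcolφ := col_orthonormal φ hφ
  have hcolψ := col_orthonormal ψ hψ
  -- row sums of T are 1
  have hrow : ∀ k, ∑ l, T k l = 1 := by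
    intro k
    have e1 : ∀ l, T k l = ∑ x, ∑ y, ((starRingEnd ℂ) (φ l x) * φ l y) *
        ((starRingEnd ℂ) (ψ k y) * ψ k x) := by
      intro l
      simp only [hT, hs, map_sum, RingHom.map_mul, Complex.conj_conj]
      rw [Finset.sum_mul_sum, Finset.sum_comm]
      exact Finset.sum_congr rfl fun x _ => Finset.sum_congr rfl fun y _ => by ring
    calc ∑ l, T k l
        = ∑ x, ∑ y, (∑ l, (starRingEnd ℂ) (φ l x) * φ l y) *
            ((starRingEnd ℂ) (ψ k y) * ψ k x) := by
          simp only [e1]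
          rw [Finset.sum_comm]
          refine Finset.sum_congr rfl fun x _ => ?_
          rw [Finset.sum_comm]
          refine Finset.sum_congr rfl fun y _ => ?_
          rw [Finset.sum_mul]
      _ = ∑ x, (starRingEnd ℂ) (ψ k x) * ψ k x := by
          refine Finset.sum_congr rfl fun x _ => ?_
          simp only [hcolφ, ite_mul, one_mul, zero_mul]
          simp [Finset.sum_ite_eq]
      _ = 1 := by rw [hψ k k]; simp
  -- column sums of T are 1
  have hcol : ∀ l, ∑ k, T k l = 1 := by
    intro l
    have e1 : ∀ k, T k l = ∑ x, ∑ y, ((starRingEnd ℂ) (ψ k y) * ψ k x) *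
        (φ l y * (starRingEnd ℂ) (φ l x)) := by
      intro k
      simp only [hT, hs, map_sum, RingHom.map_mul, Complex.conj_conj]
      rw [Finset.sum_mul_sum, Finset.sum_comm]
      exact Finset.sum_congr rfl fun x _ => Finset.sum_congr rfl fun y _ => by ring
    calc ∑ k, T k l
        = ∑ x, ∑ y, (∑ k, (starRingEnd ℂ) (ψ k y) * ψ k x) *
            (φ l y * (starRingEnd ℂ) (φ l x)) := by
          simp only [e1]
          rw [Finset.sum_comm]
          refine Finset.sum_congr rfl fun x _ => ?_
          rw [Finset.sum_comm]
          refine Finset.sum_congr rfl fun y _ => ?_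
          rw [Finset.sum_mul]
      _ = ∑ x, φ l x * (starRingEnd ℂ) (φ l x) := by
          refine Finset.sum_congr rfl fun x _ => ?_
          simp only [hcolψ, ite_mul, one_mul, zero_mul]
          simp [Finset.sum_ite_eq']
      _ = 1 := by
          rw [show (∑ x, φ l x * (starRingEnd ℂ) (φ l x))
              = ∑ x, (starRingEnd ℂ) (φ l x) * φ l x from
            Finset.sum_congr rfl fun x _ => mul_comm _ _, hφ l l]
          simp
  have htot : ∑ k, ∑ l, T k l = (n : ℂ) := by simp [hrow]
  intro i j
  set c : ℂ := 1 / n with hc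
  set a : Fin n → ℂ := fun k => (if k = i then 1 else 0) - c with ha
  set b : Fin n → ℂ := fun l => (if l = j then 1 else 0) - c with hb
  have hasum : ∑ k, a k = 0 := by
    simp [ha, Finset.sum_sub_distrib, hc]
    field_simp
    norm_num
  have hbsum : ∑ l, b l = 0 := by
    simp [hb, Finset.sum_sub_distrib, hc]
    field_simp
    norm_num
  have h0 : ∑ k, ∑ l, a k * b l * T k l = 0 := by
    rw [← key a b]
    exact horth _ ⟨a, hasum, rfl⟩ _ ⟨b, hbsum, rfl⟩
  have S1 : ∑ k, ∑ l, (if k = i then (1:ℂ) else 0) * ((if l = j then (1:ℂ) else 0) * T k l)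
      = T i j := by
    rw [Finset.sum_eq_single i (fun k _ hk => by simp [hk]) (by simp)]
    rw [Finset.sum_eq_single j (fun l _ hl => by simp [hl]) (by simp)]
    simp
  have S2 : ∑ k, ∑ l, (if k = i then (1:ℂ) else 0) * T k l = 1 := by
    rw [Finset.sum_eq_single i (fun k _ hk => by simp [hk]) (by simp)]
    simp [hrow i]
  have S3 : ∑ k, ∑ l, (if l = j then (1:ℂ) else 0) * T k l = 1 := by
    have : ∀ k, ∑ l, (if l = j then (1:ℂ) else 0) * T k l = T k j := by
      intro k
      rw [Finset.sum_eq_single j (fun l _ hl => by simp [hl]) (by simp)]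
      simp
    simp only [this]
    exact hcol j
  have comb : ∑ k, ∑ l, a k * b l * T k l
      = (∑ k, ∑ l, (if k = i then (1:ℂ) else 0) * ((if l = j then (1:ℂ) else 0) * T k l))
        - c * (∑ k, ∑ l, (if k = i then (1:ℂ) else 0) * T k l)
        - c * (∑ k, ∑ l, (if l = j then (1:ℂ) else 0) * T k l)
        + c * c * (∑ k, ∑ l, T k l) := by
    simp only [Finset.mul_sum, ← Finset.sum_sub_distrib, ← Finset.sum_add_distrib]
    refine Finset.sum_congr rfl fun k _ => Finset.sum_congr rfl fun l _ => ?_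
    simp only [ha, hb]
    ring
  rw [comb, S1, S2, S3, htot] at h0
  have hTij : T i j = 1 / (n : ℂ) := by
    rw [hc] at h0
    field_simp at h0 ⊢
    linear_combination h0
  have hns : ((Complex.normSq (s i j) : ℝ) : ℂ) = 1 / (n : ℂ) := by
    rw [← hTij, hT, Complex.normSq_eq_conj_mul_self]
  have hns' : Complex.normSq (s i j) = 1 / (n : ℝ) := by
    have h4 : ((Complex.normSq (s i j) : ℝ) : ℂ) = (((1 / (n : ℝ)) : ℝ) : ℂ) := by
      rw [hns]; push_cast; ring
    exact_mod_cast h4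
  rw [Complex.sq_norm]
  rw [hns']
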